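/- Let I ⊆ ℝ be an interval and let g and G be two differentiable convex functions on I. Let r ∈ I and δ > 0 be such that r + δ ∈ I and r − δ ∈ I. Then g′(r+δ) − g′(r−δ) ≥ 0 and |G′(r) − g′(r)| ≤ (g′(r+δ) − g′(r−δ)) + (1/δ)·Σ_{u ∈ {−δ, 0, δ}} |G(r+u) − g(r+u)|. -/

import Mathlib

open Set

/-- **Lemma 8 (an upper bound for differentiable convex functions).** If `g, G` are
differentiable convex functions on an interval `I ⊆ ℝ` (with derivatives `g', G'`),
`r ∈ I`, `δ > 0` and `r ± δ ∈ I`, then `g'(r+δ) − g'(r−δ) ≥ 0` and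
`|G'(r) − g'(r)| ≤ (g'(r+δ) − g'(r−δ)) + (1/δ)·Σ_{u ∈ {−δ,0,δ}} |G(r+u) − g(r+u)|`. -/
theorem convex_derivative_bound
    (I : Set ℝ) (hI : Convex ℝ I)
    (g G g' G' : ℝ → ℝ)
    (hgdiff : ∀ x ∈ I, HasDerivWithinAt g (g' x) I x)
    (hGdiff : ∀ x ∈ I, HasDerivWithinAt G (G' x) I x)
    (hgconv : ConvexOn ℝ I g) (hGconv : ConvexOn ℝ I G)
    (r δ : ℝ) (hδ : 0 < δ) (hr : r ∈ I) (hrp : r + δ ∈ I) (hrm : r - δ ∈ I) :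
    0 ≤ g' (r + δ) - g' (r - δ) ∧
    |G' r - g' r| ≤ (g' (r + δ) - g' (r - δ))
      + (1 / δ) * (|G (r - δ) - g (r - δ)| + |G r - g r| + |G (r + δ) - g (r + δ)|) := by

  have hlt1 : r - δ < r := by linarith
  have hlt2 : r < r + δ := by linarith
  -- slope facts
  have sg1 : g' (r - δ) ≤ (g r - g (r - δ)) / δ := by
    have := hgconv.le_slope_of_hasDerivWithinAt hrm hr hlt1 (hgdiff _ hrm)
    rwa [slope_def_field, show r - (r - δ) = δ by ring] at this
  have sg2 : (g r - g (r - δ)) / δ ≤ g' r := by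
    have := hgconv.slope_le_of_hasDerivWithinAt hrm hr hlt1 (hgdiff _ hr)
    rwa [slope_def_field, show r - (r - δ) = δ by ring] at this
  have sg3 : g' r ≤ (g (r + δ) - g r) / δ := by
    have := hgconv.le_slope_of_hasDerivWithinAt hr hrp hlt2 (hgdiff _ hr)
    rwa [slope_def_field, show r + δ - r = δ by ring] at this
  have sg4 : (g (r + δ) - g r) / δ ≤ g' (r + δ) := by
    have := hgconv.slope_le_of_hasDerivWithinAt hr hrp hlt2 (hgdiff _ hrp)
    rwa [slope_def_field, show r + δ - r = δ by ring] at this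
  have sG2 : (G r - G (r - δ)) / δ ≤ G' r := by
    have := hGconv.slope_le_of_hasDerivWithinAt hrm hr hlt1 (hGdiff _ hr)
    rwa [slope_def_field, show r - (r - δ) = δ by ring] at this
  have sG3 : G' r ≤ (G (r + δ) - G r) / δ := by
    have := hGconv.le_slope_of_hasDerivWithinAt hr hrp hlt2 (hGdiff _ hr)
    rwa [slope_def_field, show r + δ - r = δ by ring] at this
  have habs1 := le_abs_self (G (r - δ) - g (r - δ))
  have habs1' := neg_abs_le (G (r - δ) - g (r - δ))
  have habs2 := le_abs_self (G r - g r)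
  have habs2' := neg_abs_le (G r - g r)
  have habs3 := le_abs_self (G (r + δ) - g (r + δ))
  have habs3' := neg_abs_le (G (r + δ) - g (r + δ))
  refine ⟨by linarith, ?_⟩
  set A := |G (r - δ) - g (r - δ)|
  set B := |G r - g r|
  set C := |G (r + δ) - g (r + δ)|
  rw [abs_le]
  constructor
  · have key : (g r - g (r - δ)) / δ ≤ (G r - G (r - δ)) / δ + (A + B + C) / δ := by
      rw [← add_div, div_le_div_iff₀ hδ hδ]
      nlinarith
    have : (1 / δ) * (A + B + C) = (A + B + C) / δ := by ring
    linarith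
  · have key : (G (r + δ) - G r) / δ ≤ (g (r + δ) - g r) / δ + (A + B + C) / δ := by
      rw [← add_div, div_le_div_iff₀ hδ hδ]
      nlinarith
    have : (1 / δ) * (A + B + C) = (A + B + C) / δ := by ring
    linarith
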